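/- Let $R$ be a Noetherian ring and $M$ a torsion-free $R$-module. Then $M=\widetilde{M}$ if and only if every pair of non-zerodivisors $a,b\in R$ with $\mathrm{ht}_R(a,b)\ge 2$ is an $M$-regular sequence. In particular, $\widetilde{M}=\widetilde{\widetilde{M}}$ always holds. -/

import Mathlib

open Pointwise

/-- The height of an ideal. -/
noncomputable def idealHt {R : Type*} [CommRing R] (I : Ideal R) : ℕ∞ :=
  ⨅ p ∈ {p : PrimeSpectrum R | I ≤ p.asIdeal}, Order.height p

section AuxLemmas

variable {R : Type*} [CommRing R]

lemma idealHt_le {I : Ideal R} {p : PrimeSpectrum R} (h : I ≤ p.asIdeal) :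
    idealHt I ≤ Order.height p :=
  iInf₂_le p h

lemma two_le_idealHt {I : Ideal R} :
    2 ≤ idealHt I ↔ ∀ p : PrimeSpectrum R, I ≤ p.asIdeal → 2 ≤ Order.height p := by
  simp [idealHt, le_iInf_iff, Set.mem_setOf_eq]

lemma two_le_idealHt_top : (2 : ℕ∞) ≤ idealHt (⊤ : Ideal R) := by
  rw [two_le_idealHt]
  intro p hp
  exact absurd (top_le_iff.mp hp) p.isPrime.ne_top

lemma idealHt_mono {I J : Ideal R} (h : I ≤ J) : idealHt I ≤ idealHt J :=
  le_iInf₂ fun _ hp => idealHt_le (le_trans h hp)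

/-- In a Noetherian ring, there is a finite set of primes, each consisting of
zerodivisors, covering the zerodivisors, and such that every prime contains one
of them.  (Obtained from an irredundant primary decomposition of `⊥`.) -/
lemma exists_primes_cover_zeroDivisors (R : Type*) [CommRing R] [IsNoetherianRing R] :
    ∃ T : Finset (Ideal R),
      (∀ p ∈ T, p.IsPrime) ∧
      (∀ p ∈ T, ∀ x ∈ p, x ∉ nonZeroDivisors R) ∧
      (∀ x : R, x ∉ nonZeroDivisors R → ∃ p ∈ T, x ∈ p) ∧
      (∀ p : Ideal R, p.IsPrime → ∃ q ∈ T, q ≤ p) := by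
  classical
  obtain ⟨t, ht, hprim, -, hirr⟩ := Ideal.IsLasker.minimal (Ideal.isLasker R R) ⊥
  refine ⟨t.image Ideal.radical, ?_, ?_, ?_, ?_⟩
  · rintro p hp
    obtain ⟨Q, hQ, rfl⟩ := Finset.mem_image.mp hp
    exact Ideal.isPrime_radical (hprim hQ)
  · rintro p hp b hb hbnzd
    obtain ⟨Q, hQ, rfl⟩ := Finset.mem_image.mp hp
    obtain ⟨x, hx1, hx2⟩ := SetLike.not_le_iff_exists.mp (hirr hQ)
    have hx0 : x ≠ 0 := fun h => hx2 (h ▸ Q.zero_mem)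
    obtain ⟨n, hbn⟩ := hb
    have hzero : b ^ n * x = 0 := by
      have hmem : b ^ n * x ∈ t.inf id := by
        rw [Submodule.mem_finsetInf]
        intro J hJ
        by_cases hJQ : J = Q
        · exact hJQ ▸ Ideal.mul_mem_right _ _ hbn
        · exact Ideal.mul_mem_left _ _
            (Submodule.mem_finsetInf.mp hx1 J (Finset.mem_erase.mpr ⟨hJQ, hJ⟩))
      rw [ht] at hmem
      simpa using hmem
    exact hx0 ((mem_nonZeroDivisors_iff.mp (pow_mem hbnzd n)).2 x (by rwa [mul_comm] at hzero))
  · intro x hx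
    rw [mem_nonZeroDivisors_iff_right] at hx
    push_neg at hx
    obtain ⟨y, hyx, hy0⟩ := hx
    have hyt : y ∉ t.inf id := by rw [ht]; simpa using hy0
    rw [Submodule.mem_finsetInf] at hyt
    push_neg at hyt
    obtain ⟨Q, hQ, hyQ⟩ := hyt
    rcases (Ideal.isPrimary_iff.mp (hprim hQ)).2 (show y * x ∈ Q by rw [hyx]; exact Q.zero_mem)
      with h | h
    · exact absurd h hyQ
    · exact ⟨Ideal.radical Q, Finset.mem_image_of_mem _ hQ, h⟩
  · intro p hp
    have hle : t.inf id ≤ p := by rw [ht]; exact bot_le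
    obtain ⟨Q, hQ, hQp⟩ := (Ideal.IsPrime.inf_le' hp).mp hle
    exact ⟨Ideal.radical Q, Finset.mem_image_of_mem _ hQ,
      (Ideal.radical_mono hQp).trans (le_of_eq hp.radical)⟩

/-- If `J` is an ideal of height at least `2` in a Noetherian ring containing a
non-zerodivisor `s`, then there is a non-zerodivisor `b ∈ J` such that
`ht (s, b) ≥ 2`. -/
lemma exists_good_pair {R : Type*} [CommRing R] [IsNoetherianRing R] {J : Ideal R}
    (hJ : 2 ≤ idealHt J) {s : R} (hs : s ∈ nonZeroDivisors R) (hsJ : s ∈ J) :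
    ∃ b ∈ J, b ∈ nonZeroDivisors R ∧ 2 ≤ idealHt (Ideal.span {s, b}) := by
  classical
  obtain ⟨T, hT1, hT2, hT3, hT4⟩ := exists_primes_cover_zeroDivisors R
  have hfin : ((Ideal.span {s}).minimalPrimes).Finite := by
    rw [Ideal.minimalPrimes_eq_comap]
    exact (minimalPrimes.finite_of_isNoetherianRing _).image _
  set A : Finset (Ideal R) :=
    hfin.toFinset.filter
      (fun p => ∀ hp : p.IsPrime, Order.height (⟨p, hp⟩ : PrimeSpectrum R) ≤ 1) with hA
  have hprimes : ∀ p ∈ A ∪ T, p.IsPrime := by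
    intro p hp
    rcases Finset.mem_union.mp hp with hpA | hpT
    · rw [hA, Finset.mem_filter, Set.Finite.mem_toFinset] at hpA
      exact hpA.1.1.1
    · exact hT1 p hpT
  have havoid :
      ¬ ((J : Set R) ⊆ ⋃ p ∈ ((A ∪ T : Finset (Ideal R)) : Set (Ideal R)), (p : Set R)) := by
    rw [Ideal.subset_union_prime (⊥ : Ideal R) ⊥ (fun p hp _ _ => hprimes p hp)]
    rintro ⟨p, hp, hJp⟩
    rcases Finset.mem_union.mp hp with hpA | hpT
    · rw [hA, Finset.mem_filter, Set.Finite.mem_toFinset] at hpA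
      obtain ⟨hpmin, hph⟩ := hpA
      have hpprime : p.IsPrime := hpmin.1.1
      have h2 : (2 : ℕ∞) ≤ Order.height (⟨p, hpprime⟩ : PrimeSpectrum R) :=
        le_trans hJ (idealHt_le hJp)
      have h1 := hph hpprime
      have : (2 : ℕ∞) ≤ 1 := le_trans h2 h1
      norm_num at this
    · exact hT2 p hpT s (hJp hsJ) hs
  obtain ⟨b, hbJ, hb⟩ := Set.not_subset.mp havoid
  simp only [Set.mem_iUnion, SetLike.mem_coe, not_exists, Finset.mem_coe] at hb
  have hbT : ∀ p ∈ A ∪ T, b ∉ p := fun p hp hmem => hb p hp hmem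
  refine ⟨b, hbJ, ?_, ?_⟩
  · by_contra hbz
    obtain ⟨p, hpT, hbp⟩ := hT3 b hbz
    exact hbT p (Finset.mem_union_right _ hpT) hbp
  · rw [two_le_idealHt]
    intro p hp
    by_contra hlt
    push_neg at hlt
    have hp1 : Order.height p ≤ 1 := Order.le_of_lt_add_one hlt
    have hsp : s ∈ p.asIdeal := hp (Ideal.subset_span (by simp))
    have hbp : b ∈ p.asIdeal := hp (Ideal.subset_span (by simp))
    obtain ⟨q, hq, hqp⟩ := Ideal.exists_minimalPrimes_le
      (show Ideal.span {s} ≤ p.asIdeal by rwa [Ideal.span_singleton_le_iff_mem])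
    have hqprime : q.IsPrime := hq.1.1
    by_cases hqe : q = p.asIdeal
    · apply hbT p.asIdeal (Finset.mem_union_left _ ?_) hbp
      rw [hA, Finset.mem_filter, Set.Finite.mem_toFinset]
      exact ⟨hqe ▸ hq, fun hpp => hp1⟩
    · have hlt2 : (⟨q, hqprime⟩ : PrimeSpectrum R) < p :=
        lt_of_le_of_ne hqp (fun h => hqe (congrArg PrimeSpectrum.asIdeal h))
      have hq1 : Order.height (⟨q, hqprime⟩ : PrimeSpectrum R) < 1 := by
        have := (Order.height_le_coe_iff (n := 1)).mp (by exact_mod_cast hp1) _ hlt2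
        exact_mod_cast this
      have hq0 := ENat.lt_one_iff_eq_zero.mp hq1
      have hmin : IsMin (⟨q, hqprime⟩ : PrimeSpectrum R) := Order.height_eq_zero.mp hq0
      obtain ⟨q', hq'T, hq'q⟩ := hT4 q hqprime
      have hq'prime : q'.IsPrime := hT1 q' hq'T
      have hle : (⟨q, hqprime⟩ : PrimeSpectrum R) ≤ ⟨q', hq'prime⟩ :=
        hmin (show (⟨q', hq'prime⟩ : PrimeSpectrum R) ≤ ⟨q, hqprime⟩ from hq'q)
      have hsq : s ∈ q := hq.1.2 (Ideal.mem_span_singleton_self s)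
      exact hT2 q' hq'T s (hle hsq) hs

end AuxLemmas

/-- for a Noetherian ring `R` and a torsion-free `R`-module `M`
(with image `M'` inside `V = Q(R) ⊗ M`), one has `M = M̃` iff every pair of
non-zerodivisors `a, b` of `R` with `ht (a,b) ≥ 2` is an `M`-regular sequence;
in particular `M̃ = M̃̃`, where `S̃ = {f ∈ V | If ⊆ S, ht I ≥ 2}`. -/
theorem stmt7 {R : Type*} [CommRing R] [IsNoetherianRing R]
    {M : Type*} [AddCommGroup M] [Module R M]
    (htf : ∀ r ∈ nonZeroDivisors R, Function.Injective fun x : M => r • x)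
    (tl : Set (LocalizedModule (nonZeroDivisors R) M) →
      Set (LocalizedModule (nonZeroDivisors R) M))
    (htl : ∀ S, tl S = {f | ∃ I : Ideal R, 2 ≤ idealHt I ∧ ∀ i ∈ I, i • f ∈ S})
    (M' : Set (LocalizedModule (nonZeroDivisors R) M))
    (hM' : M' = Set.range (LocalizedModule.mkLinearMap (nonZeroDivisors R) M)) :
    (M' = tl M' ↔
      ∀ a b : R, a ∈ nonZeroDivisors R → b ∈ nonZeroDivisors R →
        2 ≤ idealHt (Ideal.span {a, b}) →
        (∀ x ∈ M', a • x = 0 → x = 0) ∧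
          (∀ x ∈ M', (∃ y ∈ M', b • x = a • y) → ∃ z ∈ M', x = a • z)) ∧
    tl (tl M') = tl M' := by
  classical
  subst hM'
  set L := LocalizedModule (nonZeroDivisors R) M with hL
  set g := LocalizedModule.mkLinearMap (nonZeroDivisors R) M with hg
  set Nr := Set.range g with hNr
  -- closure properties
  have hsmul : ∀ (r : R) (x : L), x ∈ Nr → r • x ∈ Nr := by
    rintro r x ⟨m, rfl⟩
    exact ⟨r • m, map_smul g r m⟩
  have hadd : ∀ x y : L, x ∈ Nr → y ∈ Nr → x + y ∈ Nr := by
    rintro x y ⟨m, rfl⟩ ⟨m', rfl⟩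
    exact ⟨m + m', map_add g m m'⟩
  -- bijectivity of the action of a nonzerodivisor
  have hbij : ∀ s ∈ nonZeroDivisors R, Function.Bijective (fun x : L => s • x) := by
    intro s hs
    have h := IsLocalizedModule.map_units g ⟨s, hs⟩
    rw [Module.End.isUnit_iff] at h
    have he : (fun x : L => s • x) = ⇑(algebraMap R (Module.End R L) s) := by
      funext x
      exact (Module.algebraMap_end_apply R R L s x).symm
    rw [he]
    exact h
  -- every element has a "denominator"
  have hdenom : ∀ f : L, ∃ t ∈ nonZeroDivisors R, t • f ∈ Nr := by
    intro f
    induction f using LocalizedModule.induction_on with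
    | _ m t =>
      refine ⟨(t : R), t.2, ⟨m, ?_⟩⟩
      rw [LocalizedModule.mkLinearMap_apply]
      rw [LocalizedModule.smul'_mk]
      exact (LocalizedModule.mk_cancel t m).symm
  -- the "conductor ideal" of an element
  have hKmem : ∀ f : L, ∀ r : R,
      r ∈ Submodule.comap (LinearMap.toSpanSingleton R L f) (LinearMap.range g) ↔
        r • f ∈ Nr := by
    intro f r
    simp [Submodule.mem_comap, LinearMap.toSpanSingleton_apply, LinearMap.mem_range, hNr,
      Set.mem_range]
  refine ⟨⟨?_, ?_⟩, ?_⟩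
  · -- forward direction
    intro hMeq a b ha hb hht
    constructor
    · intro x _ hax
      apply (hbij a ha).injective
      show a • x = a • 0
      rw [hax, smul_zero]
    · rintro x hx ⟨y, hy, hxy⟩
      obtain ⟨z, hz⟩ := (hbij a ha).surjective x
      have hz' : a • z = x := hz
      have hbz : b • z = y := by
        apply (hbij a ha).injective
        show a • b • z = a • y
        rw [smul_comm a b z, hz', hxy]
      refine ⟨z, ?_, hz'.symm⟩
      rw [hMeq, htl]
      refine ⟨Ideal.span {a, b}, hht, ?_⟩
      intro i hi
      obtain ⟨r, t, hrt⟩ := Ideal.mem_span_pair.mp hi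
      have heq : i • z = r • x + t • y := by
        rw [← hrt, ← hz', ← hbz, add_smul, mul_smul, mul_smul]
      rw [heq]
      exact hadd _ _ (hsmul r x hx) (hsmul t y hy)
  · -- backward direction
    intro hcond
    apply Set.Subset.antisymm
    · intro x hx
      rw [htl]
      exact ⟨⊤, two_le_idealHt_top, fun i _ => hsmul i x hx⟩
    · intro f hf
      rw [htl] at hf
      obtain ⟨I, hI, hIf⟩ := hf
      obtain ⟨t, ht, htf'⟩ := hdenom f
      set J : Ideal R :=
        Submodule.comap (LinearMap.toSpanSingleton R L f) (LinearMap.range g) with hJdef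
      have hIJ : I ≤ J := fun i hi => (hKmem f i).mpr (hIf i hi)
      have hJht : 2 ≤ idealHt J := le_trans hI (idealHt_mono hIJ)
      have htJ : t ∈ J := (hKmem f t).mpr htf'
      obtain ⟨b, hbJ, hbnzd, hbht⟩ := exists_good_pair hJht ht htJ
      obtain ⟨-, h2⟩ := hcond t b ht hbnzd hbht
      obtain ⟨z, hz, hz2⟩ := h2 (t • f) htf'
        ⟨b • f, (hKmem f b).mp hbJ, by rw [smul_comm b t f]⟩
      have hfz : f = z := by
        apply (hbij t ht).injective
        exact hz2
      rw [hfz]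
      exact hz
  · -- idempotence
    apply Set.Subset.antisymm
    · intro f hf
      rw [htl] at hf
      obtain ⟨I, hI, hIf⟩ := hf
      rw [htl]
      refine ⟨Submodule.comap (LinearMap.toSpanSingleton R L f) (LinearMap.range g), ?_,
        fun i hi => (hKmem f i).mp hi⟩
      rw [two_le_idealHt]
      intro p hp
      by_cases hIp : I ≤ p.asIdeal
      · exact le_trans hI (idealHt_le hIp)
      · obtain ⟨i, hiI, hip⟩ := SetLike.not_le_iff_exists.mp hIp
        have hif := hIf i hiI
        rw [htl] at hif
        obtain ⟨Ji, hJi, hJif⟩ := hif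
        refine le_trans hJi (idealHt_le ?_)
        intro j hj
        have hji : j * i ∈ Submodule.comap (LinearMap.toSpanSingleton R L f)
            (LinearMap.range g) := by
          rw [hKmem f (j * i), mul_smul]
          exact hJif j hj
        rcases p.isPrime.mem_or_mem (hp hji) with h | h
        · exact h
        · exact absurd h hip
    · intro f hf
      rw [htl] at hf ⊢
      obtain ⟨I, hI, hIf⟩ := hf
      refine ⟨I, hI, fun i hi => ?_⟩
      rw [htl]
      exact ⟨⊤, two_le_idealHt_top, fun r _ => hsmul r _ (hIf i hi)⟩
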